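/- Let ω ∈ ℝ and t₁ > 0. Let u : [0,t₁] → Q be continuous such that ι∘u is continuously differentiable with derivative u̇ : [0,t₁] → H, and let w : [0,t₁] → H and G : [0,t₁] → Q* be continuous. Assume that for every t ∈ [0,t₁] and every q ∈ Q: ⟨u̇(t), ι q⟩_H + (K u(t))(q) = ω ⟨w(t), ι q⟩_H + G(t)(q). Then for every t ∈ [0,t₁]: ‖ι u(t)‖_H² ≤ e^{2 κ_H t} ( ‖ι u(0)‖_H² + ∫₀ᵗ [ (ω² C_{Q↪H}² / κ_Q) ‖w(s)‖_H² + (1/κ_Q) ‖G(s)‖_{Q*}² ] ds ). -/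

import Mathlib

open Set

set_option maxHeartbeats 1000000 in
/-- Energy estimate for an abstract parabolic equation with a Gårding operator `K`:
`‖ι u(t)‖² ≤ e^{2κ_H t}(‖ι u(0)‖² + ∫₀ᵗ (ω²C²/κ_Q)‖w‖² + (1/κ_Q)‖G‖²)`. -/
theorem stmt8 {Q H : Type*}
    [NormedAddCommGroup Q] [InnerProductSpace ℝ Q] [CompleteSpace Q]
    [NormedAddCommGroup H] [InnerProductSpace ℝ H] [CompleteSpace H]
    (ι : Q →L[ℝ] H) (hι : Function.Injective ι)
    (C_QH : ℝ) (hCQH : ∀ q : Q, ‖ι q‖ ≤ C_QH * ‖q‖)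
    (K : Q →L[ℝ] Q →L[ℝ] ℝ) (κQ κH : ℝ) (hκQ : 0 < κQ) (hκH : 0 ≤ κH)
    (hGarding : ∀ q : Q, κQ * ‖q‖ ^ 2 - κH * ‖ι q‖ ^ 2 ≤ K q q)
    (ω t₁ : ℝ) (ht₁ : 0 < t₁)
    (u : ℝ → Q) (udot : ℝ → H) (w : ℝ → H) (G : ℝ → Q →L[ℝ] ℝ)
    (hu : ContinuousOn u (Icc 0 t₁))
    (hder : ∀ t ∈ Icc (0:ℝ) t₁, HasDerivWithinAt (fun s => ι (u s)) (udot t) (Icc 0 t₁) t)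
    (hudot : ContinuousOn udot (Icc 0 t₁))
    (hw : ContinuousOn w (Icc 0 t₁)) (hG : ContinuousOn G (Icc 0 t₁))
    (heq : ∀ t ∈ Icc (0:ℝ) t₁, ∀ q : Q,
      (inner ℝ (udot t) (ι q) : ℝ) + K (u t) q = ω * (inner ℝ (w t) (ι q) : ℝ) + G t q) :
    ∀ t ∈ Icc (0:ℝ) t₁,
      ‖ι (u t)‖ ^ 2 ≤ Real.exp (2 * κH * t) * (‖ι (u 0)‖ ^ 2 +
        ∫ s in (0:ℝ)..t, ((ω ^ 2 * C_QH ^ 2 / κQ) * ‖w s‖ ^ 2 + (1 / κQ) * ‖G s‖ ^ 2)) := by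
  have h01 : (0:ℝ) ≤ t₁ := ht₁.le
  -- continuous extensions of the coefficient functions
  set wE : ℝ → H := Set.IccExtend h01 ((Icc (0:ℝ) t₁).restrict w) with hwE
  set GE : ℝ → (Q →L[ℝ] ℝ) := Set.IccExtend h01 ((Icc (0:ℝ) t₁).restrict G) with hGE
  have hwEc : Continuous wE := hw.restrict.Icc_extend'
  have hGEc : Continuous GE := hG.restrict.Icc_extend'
  set f : ℝ → ℝ := fun s => (ω ^ 2 * C_QH ^ 2 / κQ) * ‖wE s‖ ^ 2 + (1 / κQ) * ‖GE s‖ ^ 2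
    with hfdef
  have hfc : Continuous f := by
    apply Continuous.add
    · exact continuous_const.mul (hwEc.norm.pow 2)
    · exact continuous_const.mul (hGEc.norm.pow 2)
  have hfeq : ∀ s ∈ Icc (0:ℝ) t₁,
      f s = (ω ^ 2 * C_QH ^ 2 / κQ) * ‖w s‖ ^ 2 + (1 / κQ) * ‖G s‖ ^ 2 := by
    intro s hs
    simp only [hfdef, hwE, hGE, Set.IccExtend_of_mem h01 _ hs, Set.restrict_apply]
    rfl
  have hc1 : 0 ≤ ω ^ 2 * C_QH ^ 2 / κQ := div_nonneg (by positivity) hκQ.le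
  have hc2 : 0 ≤ 1 / κQ := by positivity
  have hfnn : ∀ s, 0 ≤ f s := by
    intro s
    have := sq_nonneg ‖wE s‖
    have := sq_nonneg ‖GE s‖
    simp only [hfdef]
    nlinarith
  set F : ℝ → ℝ := fun t => ∫ s in (0:ℝ)..t, f s with hFdef
  have hFd : ∀ x : ℝ, HasDerivAt F (f x) x := fun x =>
    intervalIntegral.integral_hasDerivAt_right (hfc.intervalIntegrable _ _)
      hfc.aestronglyMeasurable.stronglyMeasurableAtFilter hfc.continuousAt
  have hFc : Continuous F := by
    rw [continuous_iff_continuousAt]; exact fun x => (hFd x).continuousAt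
  -- the key pointwise differential inequality
  set φ : ℝ → ℝ := fun s => ‖ι (u s)‖ ^ 2 with hφdef
  have key : ∀ x ∈ Icc (0:ℝ) t₁,
      2 * (inner ℝ (ι (u x)) (udot x) : ℝ) ≤ 2 * κH * φ x + f x := by
    intro x hx
    have h1 := heq x hx (u x)
    have h2 := hGarding (u x)
    have h3 : |(inner ℝ (w x) (ι (u x)) : ℝ)| ≤ ‖w x‖ * ‖ι (u x)‖ := abs_real_inner_le_norm _ _
    have h4 : ‖ι (u x)‖ ≤ C_QH * ‖u x‖ := hCQH (u x)
    have h5 : |G x (u x)| ≤ ‖G x‖ * ‖u x‖ := (G x).le_opNorm (u x) |>.trans_eq' (by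
      rw [Real.norm_eq_abs])
    have hsym : (inner ℝ (ι (u x)) (udot x) : ℝ) = inner ℝ (udot x) (ι (u x)) :=
      real_inner_comm _ _
    rw [hfeq x hx, hφdef]
    set X : ℝ := (inner ℝ (udot x) (ι (u x)) : ℝ)
    set W : ℝ := (inner ℝ (w x) (ι (u x)) : ℝ)
    have hW : ω * W ≤ |ω| * (‖w x‖ * ‖ι (u x)‖) := by
      calc ω * W ≤ |ω * W| := le_abs_self _
        _ = |ω| * |W| := abs_mul _ _
        _ ≤ |ω| * (‖w x‖ * ‖ι (u x)‖) :=
            mul_le_mul_of_nonneg_left h3 (abs_nonneg _)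
    have hW2 : |ω| * (‖w x‖ * ‖ι (u x)‖) ≤ |ω| * ‖w x‖ * (C_QH * ‖u x‖) := by
      rw [mul_assoc]
      exact mul_le_mul_of_nonneg_left
        (mul_le_mul_of_nonneg_left h4 (norm_nonneg _)) (abs_nonneg _)
    have hGu : G x (u x) ≤ ‖G x‖ * ‖u x‖ := (le_abs_self _).trans h5
    have h6 : X ≤ |ω| * ‖w x‖ * (C_QH * ‖u x‖) + ‖G x‖ * ‖u x‖
        - (κQ * ‖u x‖ ^ 2 - κH * ‖ι (u x)‖ ^ 2) := by
      have : X = ω * W + G x (u x) - K (u x) (u x) := by linarith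
      rw [this]
      have := hW.trans hW2
      linarith
    have e : (ω ^ 2 * C_QH ^ 2 / κQ) * ‖w x‖ ^ 2 + (1 / κQ) * ‖G x‖ ^ 2
        = (ω ^ 2 * C_QH ^ 2 * ‖w x‖ ^ 2 + ‖G x‖ ^ 2) / κQ := by
      field_simp
    simp only [hsym]
    rw [e, ← sub_le_iff_le_add', le_div_iff₀ hκQ]
    have h7 : (0:ℝ) ≤ 2 * κQ := by linarith
    have h8 := mul_le_mul_of_nonneg_left h6 h7
    have h9 : 2 * κQ * (|ω| * ‖w x‖ * (C_QH * ‖u x‖)) ≤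
        ω ^ 2 * C_QH ^ 2 * ‖w x‖ ^ 2 + κQ ^ 2 * ‖u x‖ ^ 2 := by
      have key2 : (|ω| * C_QH * ‖w x‖) ^ 2 = ω ^ 2 * C_QH ^ 2 * ‖w x‖ ^ 2 := by
        rw [mul_pow, mul_pow, sq_abs]
      nlinarith [sq_nonneg (|ω| * C_QH * ‖w x‖ - κQ * ‖u x‖), key2]
    have h10 : 2 * κQ * (‖G x‖ * ‖u x‖) ≤ ‖G x‖ ^ 2 + κQ ^ 2 * ‖u x‖ ^ 2 := by
      nlinarith [sq_nonneg (‖G x‖ - κQ * ‖u x‖)]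
    nlinarith [h8, h9, h10]
  -- the auxiliary function is antitone
  set ψ : ℝ → ℝ := fun s => Real.exp (-(2 * κH) * s) * φ s - F s with hψdef
  have hφc : ContinuousOn φ (Icc 0 t₁) := (ι.continuous.comp_continuousOn hu).norm.pow 2
  have hexpc : Continuous fun s : ℝ => Real.exp (-(2 * κH) * s) :=
    Real.continuous_exp.comp (continuous_const.mul continuous_id)
  have hψc : ContinuousOn ψ (Icc 0 t₁) :=
    (hexpc.continuousOn.mul hφc).sub hFc.continuousOn
  have hmono : AntitoneOn ψ (Icc 0 t₁) := by
    apply antitoneOn_of_hasDerivWithinAt_nonpos (convex_Icc 0 t₁) hψc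
      (f' := fun x => (Real.exp (-(2 * κH) * x) * (-(2 * κH))) * φ x
        + Real.exp (-(2 * κH) * x) * (2 * (inner ℝ (ι (u x)) (udot x) : ℝ)) - f x)
    · intro x hx
      rw [interior_Icc] at hx
      rw [interior_Icc]
      have hx' : x ∈ Icc (0:ℝ) t₁ := Ioo_subset_Icc_self hx
      have hd1 : HasDerivAt (fun s : ℝ => Real.exp (-(2 * κH) * s))
          (Real.exp (-(2 * κH) * x) * (-(2 * κH))) x := by
        simpa using ((hasDerivAt_id x).const_mul (-(2 * κH))).exp
      have hd2 : HasDerivWithinAt φ (2 * (inner ℝ (ι (u x)) (udot x) : ℝ)) (Ioo 0 t₁) x :=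
        ((hder x hx').norm_sq).mono Ioo_subset_Icc_self
      exact (hd1.hasDerivWithinAt.mul hd2).sub (hFd x).hasDerivWithinAt
    · intro x hx
      rw [interior_Icc] at hx
      have hx' : x ∈ Icc (0:ℝ) t₁ := Ioo_subset_Icc_self hx
      have hE0 : 0 < Real.exp (-(2 * κH) * x) := Real.exp_pos _
      have hE1 : Real.exp (-(2 * κH) * x) ≤ 1 := by
        rw [← Real.exp_zero]
        apply Real.exp_le_exp.mpr
        nlinarith [hx.1.le]
      have hk := key x hx'
      have hfx := hfnn x
      nlinarith [mul_le_mul_of_nonneg_left hk hE0.le,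
        mul_le_mul_of_nonneg_right hE1 hfx]
  -- conclude
  intro t ht
  have h0mem : (0:ℝ) ∈ Icc (0:ℝ) t₁ := left_mem_Icc.mpr h01
  have hψt := hmono h0mem ht ht.1
  have hF0 : F 0 = 0 := intervalIntegral.integral_same
  have hEq : (∫ s in (0:ℝ)..t,
      ((ω ^ 2 * C_QH ^ 2 / κQ) * ‖w s‖ ^ 2 + (1 / κQ) * ‖G s‖ ^ 2)) = F t := by
    apply intervalIntegral.integral_congr
    intro s hs
    rw [Set.uIcc_of_le ht.1] at hs
    exact (hfeq s ⟨hs.1, hs.2.trans ht.2⟩).symm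
  have hψ0 : ψ 0 = φ 0 := by
    simp [hψdef, hF0]
  have hexpt : Real.exp (-(2 * κH) * t) = (Real.exp (2 * κH * t))⁻¹ := by
    rw [← Real.exp_neg]
    ring_nf
  have hineq : (Real.exp (2 * κH * t))⁻¹ * φ t ≤ φ 0 + F t := by
    have : Real.exp (-(2 * κH) * t) * φ t - F t ≤ φ 0 := hψ0 ▸ hψt
    rw [hexpt] at this
    linarith
  have := (inv_mul_le_iff₀ (Real.exp_pos (2 * κH * t))).mp hineq
  calc ‖ι (u t)‖ ^ 2 = φ t := rfl
    _ ≤ Real.exp (2 * κH * t) * (φ 0 + F t) := this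
    _ = Real.exp (2 * κH * t) * (‖ι (u 0)‖ ^ 2 +
        ∫ s in (0:ℝ)..t, ((ω ^ 2 * C_QH ^ 2 / κQ) * ‖w s‖ ^ 2 + (1 / κQ) * ‖G s‖ ^ 2)) := by
      rw [hEq]
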